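/- For any real number a in (0,1) and integer T ≥ 2, if B̃ = ⌈log_{1/a}(log₂ T)⌉, then ⌈T^{1-a^{B̃}}⌉ ≥ T/2, and consequently ⌈T^{1-a^{B̃}}⌉ + ⌈T^{1-a^{B̃+1}}⌉ ≥ T. -/

import Mathlib

/-- For any `a ∈ (0,1)` and integer `T ≥ 2`, with `B̃ = ⌈log_{1/a}(log₂ T)⌉`,
we have `⌈T^{1-a^B̃}⌉ ≥ T/2`, and consequently
`⌈T^{1-a^B̃}⌉ + ⌈T^{1-a^{B̃+1}}⌉ ≥ T`. -/
theorem stmt0 (a : ℝ) (ha : 0 < a) (ha1 : a < 1) (T : ℕ) (hT : 2 ≤ T)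
    (B : ℕ) (hB : B = ⌈Real.logb (1 / a) (Real.logb 2 (T : ℝ))⌉₊) :
    ((⌈(T : ℝ) ^ (1 - a ^ B)⌉₊ : ℝ) ≥ (T : ℝ) / 2) ∧
    ((⌈(T : ℝ) ^ (1 - a ^ B)⌉₊ : ℝ) + (⌈(T : ℝ) ^ (1 - a ^ (B + 1))⌉₊ : ℝ) ≥ (T : ℝ)) := by
  have hT2 : (2:ℝ) ≤ (T:ℝ) := by exact_mod_cast hT
  have hT1 : (1:ℝ) < (T:ℝ) := by linarith
  have hTpos : (0:ℝ) < (T:ℝ) := by linarith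
  have hlog2T : 1 ≤ Real.logb 2 (T:ℝ) := by
    have h := Real.logb_le_logb_of_le (by norm_num : (1:ℝ) < 2) (by norm_num : (0:ℝ) < 2) hT2
    simpa using h
  have hlogpos : 0 < Real.logb 2 (T:ℝ) := by linarith
  have hinv : (1:ℝ) < 1 / a := by
    rw [lt_div_iff₀ ha]; linarith
  -- B ≥ logb (1/a) (logb 2 T)
  have hBge : Real.logb (1 / a) (Real.logb 2 (T:ℝ)) ≤ (B:ℝ) := by
    rw [hB]; exact Nat.le_ceil _
  have hpow : Real.logb 2 (T:ℝ) ≤ (1 / a) ^ B := by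
    have h1 : (1/a : ℝ) ^ (Real.logb (1/a) (Real.logb 2 (T:ℝ))) = Real.logb 2 (T:ℝ) :=
      Real.rpow_logb (by linarith) (by linarith) hlogpos
    have h2 : (1/a : ℝ) ^ (Real.logb (1/a) (Real.logb 2 (T:ℝ))) ≤ (1/a : ℝ) ^ (B:ℝ) :=
      Real.rpow_le_rpow_left_iff hinv |>.mpr hBge
    rw [h1, Real.rpow_natCast] at h2
    exact h2
  have haBpos : 0 < a ^ B := pow_pos ha B
  have haB : a ^ B ≤ 1 / Real.logb 2 (T:ℝ) := by
    rw [le_div_iff₀ hlogpos]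
    have : a ^ B * (1/a) ^ B = 1 := by
      rw [← mul_pow]; field_simp; exact one_pow B
    calc a ^ B * Real.logb 2 (T:ℝ) ≤ a ^ B * (1/a)^B := by
          exact mul_le_mul_of_nonneg_left hpow (le_of_lt haBpos)
      _ = 1 := this
  -- T ^ (a^B) ≤ 2
  have hTaB : (T:ℝ) ^ (a ^ B : ℝ) ≤ 2 := by
    have h1 : (T:ℝ) ^ (a ^ B : ℝ) ≤ (T:ℝ) ^ (1 / Real.logb 2 (T:ℝ)) :=
      (Real.rpow_le_rpow_left_iff hT1).mpr haB
    have h2 : (T:ℝ) ^ (1 / Real.logb 2 (T:ℝ)) = 2 := by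
      rw [Real.rpow_def_of_pos hTpos, Real.logb, one_div, inv_div]
      rw [mul_comm, div_mul_cancel₀, Real.exp_log (by norm_num : (0:ℝ) < 2)]
      exact Real.log_ne_zero_of_pos_of_ne_one hTpos (by linarith)
    linarith [h1.trans_eq h2]
  have key : (T:ℝ) / 2 ≤ (T:ℝ) ^ (1 - a ^ B : ℝ) := by
    have hsub : (T:ℝ) ^ (1 - a ^ B : ℝ) = (T:ℝ) ^ (1:ℝ) / (T:ℝ) ^ (a ^ B : ℝ) :=
      Real.rpow_sub hTpos 1 _
    rw [hsub, Real.rpow_one]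
    exact div_le_div_of_nonneg_left (le_of_lt hTpos) (Real.rpow_pos_of_pos hTpos _) hTaB
  have key2 : (T:ℝ) ^ (1 - a ^ B : ℝ) ≤ (T:ℝ) ^ (1 - a ^ (B+1) : ℝ) := by
    apply (Real.rpow_le_rpow_left_iff hT1).mpr
    have : a ^ (B+1) ≤ a ^ B := by
      rw [pow_succ]
      nlinarith [haBpos]
    linarith
  have c1 : (T:ℝ) ^ (1 - a ^ B : ℝ) ≤ (⌈(T : ℝ) ^ (1 - a ^ B)⌉₊ : ℝ) := Nat.le_ceil _
  have c2 : (T:ℝ) ^ (1 - a ^ (B+1) : ℝ) ≤ (⌈(T : ℝ) ^ (1 - a ^ (B+1))⌉₊ : ℝ) := Nat.le_ceil _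
  constructor
  · linarith
  · linarith
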